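/- tan(π/5)·tan(2π/5) = √5, i.e. the ratio tan(2π/5)/tan(π/10) equals 5 + 2√5 and tan(π/5)/tan(π/10) equals √5. -/
import Mathlib

open Real

/-- `tan(π/5)·tan(2π/5) = √5`; the ratio `tan(2π/5)/tan(π/10)` is `5+2√5` and
`tan(π/5)/tan(π/10)` is `√5`. -/
theorem tan_ratios_pi_div_ten :
    Real.tan (π / 5) * Real.tan (2 * π / 5) = Real.sqrt 5 ∧
    Real.tan (2 * π / 5) / Real.tan (π / 10) = 5 + 2 * Real.sqrt 5 ∧
    Real.tan (π / 5) / Real.tan (π / 10) = Real.sqrt 5 := by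
  have hs : Real.sqrt 5 ^ 2 = 5 := Real.sq_sqrt (by norm_num)
  have hs2 : (2:ℝ) < Real.sqrt 5 := by
    nlinarith [Real.sqrt_nonneg 5, hs]
  have hs3 : Real.sqrt 5 < 3 := by
    nlinarith [Real.sqrt_nonneg 5, hs]
  have hpi := Real.pi_pos
  have hc1 : Real.cos (π / 5) = (1 + Real.sqrt 5) / 4 := Real.cos_pi_div_five
  have hc2 : Real.cos (2 * π / 5) = (Real.sqrt 5 - 1) / 4 := by
    have : (2 : ℝ) * π / 5 = 2 * (π / 5) := by ring
    rw [this, Real.cos_two_mul, hc1]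
    nlinarith [hs]
  have hs1pos : 0 < Real.sin (π / 5) :=
    Real.sin_pos_of_pos_of_lt_pi (by positivity) (by linarith)
  have hs2pos : 0 < Real.sin (2 * π / 5) :=
    Real.sin_pos_of_pos_of_lt_pi (by positivity) (by linarith)
  have hs1sq : Real.sin (π / 5) ^ 2 = (5 - Real.sqrt 5) / 8 := by
    have := Real.sin_sq_add_cos_sq (π / 5)
    rw [hc1] at this; nlinarith [hs]
  have hs2sq : Real.sin (2 * π / 5) ^ 2 = (5 + Real.sqrt 5) / 8 := by
    have := Real.sin_sq_add_cos_sq (2 * π / 5)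
    rw [hc2] at this; nlinarith [hs]
  have hc1pos : 0 < Real.cos (π / 5) := by rw [hc1]; linarith
  have hc2pos : 0 < Real.cos (2 * π / 5) := by rw [hc2]; linarith
  -- tan(π/10) = (tan(2π/5))⁻¹
  have h10 : Real.tan (π / 10) = (Real.tan (2 * π / 5))⁻¹ := by
    have : π / 10 = π / 2 - 2 * π / 5 := by ring
    rw [this, Real.tan_pi_div_two_sub]
  have ht1 : Real.tan (π / 5) = Real.sin (π / 5) / Real.cos (π / 5) := Real.tan_eq_sin_div_cos _
  have ht2 : Real.tan (2 * π / 5) = Real.sin (2 * π / 5) / Real.cos (2 * π / 5) :=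
    Real.tan_eq_sin_div_cos _
  have ht2pos : 0 < Real.tan (2 * π / 5) := by rw [ht2]; positivity
  have ht1pos : 0 < Real.tan (π / 5) := by rw [ht1]; positivity
  have hprod : Real.tan (π / 5) * Real.tan (2 * π / 5) = Real.sqrt 5 := by
    have hcc : Real.cos (π / 5) * Real.cos (2 * π / 5) = 1 / 4 := by
      rw [hc1, hc2]; nlinarith [hs]
    have hsq : (Real.tan (π / 5) * Real.tan (2 * π / 5)) ^ 2 = 5 := by
      rw [ht1, ht2, div_mul_div_comm, hcc, div_pow, mul_pow, hs1sq, hs2sq]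
      linear_combination (-(1/4 : ℝ)) * hs
    have hnn : 0 ≤ Real.tan (π / 5) * Real.tan (2 * π / 5) := by positivity
    rw [← Real.sqrt_sq hnn, hsq]
  refine ⟨hprod, ?_, ?_⟩
  · rw [h10, div_eq_mul_inv, inv_inv, ← sq, ht2, div_pow, hs2sq, hc2]
    rw [div_eq_iff (ne_of_gt (by nlinarith [hs2] : (0:ℝ) < ((Real.sqrt 5 - 1) / 4) ^ 2))]
    linear_combination ((-2 * Real.sqrt 5 - 1) / 16) * hs
  · rw [h10, div_eq_mul_inv, inv_inv, hprod]
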